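/- Under the hypotheses of the previous drift lemma (monotone non-decreasing X_n bounded above by f*, with conditional probability at least η of gaining at least γ whenever X_n ≤ f* − ε), the expected hitting time T := inf{n : X_n > f* − ε} satisfies E[T] ≤ ⌈(f* − X_0)/γ⌉ / η. -/

import Mathlib

open MeasureTheory

/-- Expected hitting time bound: under the drift hypotheses (monotone process bounded by
`fstar`, deterministic start `x0`, and conditional probability at least `η` of a gain of
at least `γ` whenever `X n ≤ fstar - ε`), the hitting time
`T = inf {n | X n > fstar - ε}` satisfies `E[T] ≤ ⌈(fstar - x0)/γ⌉ / η`. -/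
theorem expected_hitting_time_bound
    {Ω : Type*} {m0 : MeasurableSpace Ω} (μ : Measure Ω) [IsProbabilityMeasure μ]
    (ℱ : Filtration ℕ m0) (X : ℕ → Ω → ℝ) (hadap : Adapted ℱ X)
    (fstar ε γ η x0 : ℝ) (hε : 0 < ε) (hγ : 0 < γ) (hη : 0 < η) (hη1 : η ≤ 1)
    (hX0 : X 0 = fun _ => x0)
    (hmono : ∀ n, ∀ᵐ ω ∂μ, X n ω ≤ X (n + 1) ω)
    (hbdd : ∀ n, ∀ᵐ ω ∂μ, X n ω ≤ fstar)
    (hdrift : ∀ n, ∀ᵐ ω ∂μ, X n ω ≤ fstar - ε →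
      η ≤ (μ[Set.indicator {ω' | γ ≤ X (n + 1) ω' - X n ω'} (fun _ => (1 : ℝ)) | ℱ n]) ω) :
    ∫⁻ ω, (⨅ n ∈ {n : ℕ | fstar - ε < X n ω}, (n : ENNReal)) ∂μ ≤
      ENNReal.ofReal ((⌈(fstar - x0) / γ⌉₊ : ℝ) / η) := by
  classical
  set K : ℕ := ⌈(fstar - x0) / γ⌉₊ with hKdef
  set A : ℕ → Set Ω := fun n => {ω | X n ω ≤ fstar - ε} with hAdef
  set G : ℕ → Set Ω := fun n => {ω' | γ ≤ X (n + 1) ω' - X n ω'} with hGdef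
  set Sc : ℕ → Ω → ℕ := fun n ω =>
    ((Finset.range n).filter fun k => γ ≤ X (k + 1) ω - X k ω).card with hScdef
  set W : ℕ → Ω → ℝ := fun n => Set.indicator (A n) (fun ω => (K : ℝ) - (Sc n ω : ℝ)) with hWdef
  -- measurability facts
  have hXm : ∀ n, Measurable (X n) := fun n => (hadap n).mono (ℱ.le n) le_rfl
  have hAF : ∀ n, MeasurableSet[ℱ n] (A n) := fun n => (hadap n) measurableSet_Iic
  have hAm : ∀ n, MeasurableSet (A n) := fun n => ℱ.le n _ (hAF n)
  have hGm : ∀ n, MeasurableSet (G n) := fun n =>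
    measurableSet_le measurable_const ((hXm (n + 1)).sub (hXm n))
  have hSc_succ : ∀ n ω, Sc (n + 1) ω
      = Sc n ω + (if γ ≤ X (n + 1) ω - X n ω then 1 else 0) := by
    intro n ω
    rw [hScdef]
    simp only [Finset.range_add_one, Finset.filter_insert]
    split
    · rw [Finset.card_insert_of_notMem (by simp)]
    · simp
  have hSc_le : ∀ n ω, Sc n ω ≤ n := fun n ω =>
    (Finset.card_filter_le _ _).trans_eq (Finset.card_range n)
  have hScm : ∀ n, Measurable fun ω => (Sc n ω : ℝ) := by
    intro n
    induction n with
    | zero => simpa [hScdef] using measurable_const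
    | succ n ih =>
        have : (fun ω => (Sc (n + 1) ω : ℝ))
            = fun ω => (Sc n ω : ℝ) + Set.indicator (G n) (fun _ => (1 : ℝ)) ω := by
          funext ω
          rw [hSc_succ n ω]
          push_cast
          by_cases h : γ ≤ X (n + 1) ω - X n ω
          · simp [hGdef, Set.indicator, h]
          · simp [hGdef, Set.indicator, h]
        rw [this]
        exact ih.add (measurable_const.indicator (hGm n))
  have hWm : ∀ n, Measurable (W n) := fun n =>
    (measurable_const.sub (hScm n)).indicator (hAm n)
  have hWint : ∀ n, Integrable (W n) μ := by
    intro n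
    refine (integrable_const ((K : ℝ) + n)).mono' (hWm n).aestronglyMeasurable
      (Filter.Eventually.of_forall fun ω => ?_)
    rw [Real.norm_eq_abs]
    by_cases h : ω ∈ A n
    · rw [hWdef]
      simp only [Set.indicator_of_mem h]
      have h1 : (0 : ℝ) ≤ (Sc n ω : ℝ) := Nat.cast_nonneg _
      have h2 : (Sc n ω : ℝ) ≤ n := by exact_mod_cast hSc_le n ω
      have h3 : (0 : ℝ) ≤ (K : ℝ) := Nat.cast_nonneg _
      have h4 : (0 : ℝ) ≤ (n : ℝ) := Nat.cast_nonneg _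
      rw [abs_le]; constructor <;> nlinarith
    · rw [hWdef]
      simp only [Set.indicator_of_notMem h, abs_zero]
      positivity
  -- key real inequality for K
  have hKγ : fstar - x0 ≤ γ * K := by
    have h1 : (fstar - x0) / γ ≤ (K : ℝ) := Nat.le_ceil _
    rw [div_le_iff₀ hγ] at h1
    linarith
  -- a.e. good event
  have hE : ∀ᵐ ω ∂μ, (∀ n, X n ω ≤ X (n + 1) ω) ∧ (∀ n, X n ω ≤ fstar) :=
    ((ae_all_iff.2 hmono).and (ae_all_iff.2 hbdd))
  have hlow : ∀ᵐ ω ∂μ, ∀ n, x0 + γ * (Sc n ω : ℝ) ≤ X n ω := by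
    filter_upwards [hE] with ω hω
    intro n
    induction n with
    | zero =>
        have : X 0 ω = x0 := by rw [hX0]
        simp [hScdef, this]
    | succ n ih =>
        rw [hSc_succ n ω]
        by_cases h : γ ≤ X (n + 1) ω - X n ω
        · rw [if_pos h]; push_cast; nlinarith
        · rw [if_neg h]
          have := hω.1 n
          push_cast
          nlinarith
  have hSK : ∀ᵐ ω ∂μ, ∀ n, ω ∈ A n → (Sc n ω : ℝ) + 1 ≤ (K : ℝ) := by
    filter_upwards [hlow] with ω hω
    intro n hA
    have hXA : X n ω ≤ fstar - ε := hA
    have h1 : γ * (Sc n ω : ℝ) ≤ fstar - ε - x0 := by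
      have := hω n; linarith
    have h2 : γ * (Sc n ω : ℝ) < γ * (K : ℝ) := by
      calc γ * (Sc n ω : ℝ) ≤ fstar - ε - x0 := h1
        _ < fstar - x0 := by linarith
        _ ≤ γ * K := hKγ
    have h3 : (Sc n ω : ℝ) < (K : ℝ) := lt_of_mul_lt_mul_left h2 hγ.le
    have h4 : Sc n ω < K := by exact_mod_cast h3
    exact_mod_cast Nat.succ_le_of_lt h4
  -- conditional expectation estimate
  have hcond : ∀ n, η * (μ (A n)).toReal
      ≤ ∫ ω in A n, Set.indicator (G n) (fun _ => (1 : ℝ)) ω ∂μ := by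
    intro n
    have hInd_int : Integrable (Set.indicator (G n) (fun _ => (1 : ℝ))) μ :=
      (integrable_const (1 : ℝ)).indicator (hGm n)
    calc η * (μ (A n)).toReal = ∫ _ω in A n, η ∂μ := by
          rw [setIntegral_const, smul_eq_mul, mul_comm]; rfl
      _ ≤ ∫ ω in A n, (μ[Set.indicator (G n) (fun _ => (1 : ℝ))|ℱ n]) ω ∂μ := by
          refine setIntegral_mono_ae_restrict
            (integrableOn_const (measure_ne_top _ _))
            integrable_condExp.integrableOn
            ((ae_restrict_iff' (hAm n)).2 ?_)
          filter_upwards [hdrift n] with ω hω hA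
          exact hω hA
      _ = ∫ ω in A n, Set.indicator (G n) (fun _ => (1 : ℝ)) ω ∂μ :=
          setIntegral_condExp (ℱ.le n) hInd_int (hAF n)
  -- one-step decrease
  have hstep : ∀ n, ∫ ω, W (n + 1) ω ∂μ + η * (μ (A n)).toReal ≤ ∫ ω, W n ω ∂μ := by
    intro n
    have hInd_int : Integrable (Set.indicator (A n) (Set.indicator (G n) (fun _ => (1 : ℝ)))) μ :=
      ((integrable_const (1 : ℝ)).indicator (hGm n)).indicator (hAm n)
    have hptwise : ∀ᵐ ω ∂μ,
        W (n + 1) ω + Set.indicator (A n) (Set.indicator (G n) (fun _ => (1 : ℝ))) ω ≤ W n ω := by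
      filter_upwards [hE, hSK] with ω hω hK
      have hmn : X n ω ≤ X (n + 1) ω := hω.1 n
      by_cases hA : ω ∈ A n
      · have hs : (Sc n ω : ℝ) + 1 ≤ (K : ℝ) := hK n hA
        have hWn : W n ω = (K : ℝ) - (Sc n ω : ℝ) := Set.indicator_of_mem hA _
        by_cases hG : γ ≤ X (n + 1) ω - X n ω
        · have hIn : Set.indicator (A n) (Set.indicator (G n) (fun _ => (1 : ℝ))) ω = 1 := by
            rw [Set.indicator_of_mem hA, Set.indicator_of_mem (show ω ∈ G n from hG)]
          have hScs : (Sc (n + 1) ω : ℝ) = (Sc n ω : ℝ) + 1 := by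
            rw [hSc_succ n ω, if_pos hG]; push_cast; ring
          by_cases hA1 : ω ∈ A (n + 1)
          · have hW1 : W (n + 1) ω = (K : ℝ) - (Sc (n + 1) ω : ℝ) := Set.indicator_of_mem hA1 _
            rw [hWn, hIn, hW1, hScs]; ring_nf; linarith [le_refl (0:ℝ)]
          · have hW1 : W (n + 1) ω = 0 := Set.indicator_of_notMem hA1 _
            rw [hWn, hIn, hW1]; linarith
        · have hIn : Set.indicator (A n) (Set.indicator (G n) (fun _ => (1 : ℝ))) ω = 0 := by
            rw [Set.indicator_of_mem hA, Set.indicator_of_notMem (show ω ∉ G n from hG)]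
          have hScs : (Sc (n + 1) ω : ℝ) = (Sc n ω : ℝ) := by
            rw [hSc_succ n ω, if_neg hG]; push_cast; ring
          by_cases hA1 : ω ∈ A (n + 1)
          · have hW1 : W (n + 1) ω = (K : ℝ) - (Sc (n + 1) ω : ℝ) := Set.indicator_of_mem hA1 _
            rw [hWn, hIn, hW1, hScs]; linarith
          · have hW1 : W (n + 1) ω = 0 := Set.indicator_of_notMem hA1 _
            rw [hWn, hIn, hW1]; linarith
      · have hA1 : ω ∉ A (n + 1) := by
          intro hmem
          exact hA (le_trans hmn hmem)
        have hIn : Set.indicator (A n) (Set.indicator (G n) (fun _ => (1 : ℝ))) ω = 0 :=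
          Set.indicator_of_notMem hA _
        have hW1 : W (n + 1) ω = 0 := Set.indicator_of_notMem hA1 _
        have hW0' : W n ω = 0 := Set.indicator_of_notMem hA _
        rw [hW1, hIn, hW0']
        simp
    have hint : ∫ ω, (W (n + 1) ω + Set.indicator (A n)
        (Set.indicator (G n) (fun _ => (1 : ℝ))) ω) ∂μ ≤ ∫ ω, W n ω ∂μ :=
      integral_mono_ae ((hWint (n + 1)).add hInd_int) (hWint n) hptwise
    rw [integral_add (hWint (n + 1)) hInd_int] at hint
    have heq : ∫ ω, Set.indicator (A n) (Set.indicator (G n) (fun _ => (1 : ℝ))) ω ∂μ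
        = ∫ ω in A n, Set.indicator (G n) (fun _ => (1 : ℝ)) ω ∂μ :=
      integral_indicator (hAm n)
    rw [heq] at hint
    linarith [hcond n]
  have hWnonneg : ∀ n, 0 ≤ ∫ ω, W n ω ∂μ := by
    intro n
    refine integral_nonneg_of_ae ?_
    filter_upwards [hSK] with ω hK
    simp only [Pi.zero_apply]
    by_cases hA : ω ∈ A n
    · rw [hWdef]; simp only [Set.indicator_of_mem hA]; linarith [hK n hA]
    · rw [hWdef]; simp [Set.indicator_of_notMem hA]
  have hW0 : ∫ ω, W 0 ω ∂μ ≤ (K : ℝ) := by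
    have hb : ∀ ω, W 0 ω ≤ (K : ℝ) := by
      intro ω
      by_cases hA : ω ∈ A 0
      · rw [hWdef]; simp only [Set.indicator_of_mem hA]
        have : (0:ℝ) ≤ (Sc 0 ω : ℝ) := Nat.cast_nonneg _
        linarith
      · rw [hWdef]; simp only [Set.indicator_of_notMem hA]; positivity
    calc ∫ ω, W 0 ω ∂μ ≤ ∫ _ω, (K : ℝ) ∂μ :=
          integral_mono (hWint 0) (integrable_const _) hb
      _ = (K : ℝ) := by simp
  have hsum : ∀ N, ∫ ω, W N ω ∂μ + η * ∑ n ∈ Finset.range N, (μ (A n)).toReal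
      ≤ ∫ ω, W 0 ω ∂μ := by
    intro N
    induction N with
    | zero => simp
    | succ N ih =>
        rw [Finset.sum_range_succ]
        have := hstep N
        nlinarith
  have hfin : ∀ N, ∑ n ∈ Finset.range N, μ (A n) ≤ ENNReal.ofReal ((K : ℝ) / η) := by
    intro N
    have h1 : ∑ n ∈ Finset.range N, (μ (A n)).toReal ≤ (K : ℝ) / η := by
      rw [le_div_iff₀ hη, mul_comm]
      have := hsum N
      linarith [hWnonneg N, hW0]
    calc ∑ n ∈ Finset.range N, μ (A n)
        = ENNReal.ofReal (∑ n ∈ Finset.range N, (μ (A n)).toReal) := by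
          rw [ENNReal.ofReal_sum_of_nonneg (fun i _ => ENNReal.toReal_nonneg)]
          exact Finset.sum_congr rfl fun i _ => (ENNReal.ofReal_toReal (measure_ne_top μ _)).symm
      _ ≤ ENNReal.ofReal ((K : ℝ) / η) := ENNReal.ofReal_le_ofReal h1
  have htsum : ∑' n, μ (A n) ≤ ENNReal.ofReal ((K : ℝ) / η) := by
    rw [ENNReal.tsum_eq_iSup_sum]
    refine iSup_le fun s => ?_
    refine le_trans (Finset.sum_le_sum_of_subset fun n hn => Finset.mem_range.2 ?_) (hfin (s.sup id + 1))
    exact Nat.lt_succ_of_le (Finset.le_sup (f := id) hn)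
  -- pointwise bound on the hitting time
  have hTle : ∀ ω, (⨅ n ∈ {n : ℕ | fstar - ε < X n ω}, (n : ENNReal))
      ≤ ∑' n, Set.indicator (A n) (fun _ => (1 : ENNReal)) ω := by
    intro ω
    by_cases h : ∃ n, fstar - ε < X n ω
    · set m := Nat.find h with hm
      have h1 : (⨅ n ∈ {n : ℕ | fstar - ε < X n ω}, (n : ENNReal)) ≤ (m : ENNReal) :=
        iInf₂_le m (Nat.find_spec h)
      refine h1.trans ?_
      have h2 : ∀ n ∈ Finset.range m, Set.indicator (A n) (fun _ => (1 : ENNReal)) ω = 1 := by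
        intro n hn
        have hnm : n < m := Finset.mem_range.1 hn
        have : ¬ (fstar - ε < X n ω) := Nat.find_min h hnm
        exact Set.indicator_of_mem (show ω ∈ A n from not_lt.1 this) _
      calc (m : ENNReal) = ∑ n ∈ Finset.range m, (1 : ENNReal) := by simp
        _ = ∑ n ∈ Finset.range m, Set.indicator (A n) (fun _ => (1 : ENNReal)) ω :=
            (Finset.sum_congr rfl h2).symm
        _ ≤ ∑' n, Set.indicator (A n) (fun _ => (1 : ENNReal)) ω := ENNReal.sum_le_tsum _
    · push_neg at h
      have h2 : ∀ n, Set.indicator (A n) (fun _ => (1 : ENNReal)) ω = 1 := fun n =>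
        Set.indicator_of_mem (show ω ∈ A n from h n) _
      have : ∑' n, Set.indicator (A n) (fun _ => (1 : ENNReal)) ω = ⊤ := by
        rw [tsum_congr h2]
        exact ENNReal.tsum_const_eq_top_of_ne_zero one_ne_zero
      rw [this]
      exact le_top
  calc ∫⁻ ω, (⨅ n ∈ {n : ℕ | fstar - ε < X n ω}, (n : ENNReal)) ∂μ
      ≤ ∫⁻ ω, ∑' n, Set.indicator (A n) (fun _ => (1 : ENNReal)) ω ∂μ := lintegral_mono hTle
    _ = ∑' n, ∫⁻ ω, Set.indicator (A n) (fun _ => (1 : ENNReal)) ω ∂μ :=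
        lintegral_tsum fun n => (measurable_const.indicator (hAm n)).aemeasurable
    _ = ∑' n, μ (A n) := by
        refine tsum_congr fun n => ?_
        rw [lintegral_indicator (hAm n)]
        simp
    _ ≤ ENNReal.ofReal ((K : ℝ) / η) := htsum
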